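/- Let a : ℝ² → ℝ be C¹ with 0 < A ≤ a ≤ Ā, |∇a| ≤ A₁, and let ε ∈ (0, ε₀) with ε₀ = min{1/2, A²/(2A₁)}. In Cartesian coordinates, for each x ∈ ℝ the equation y·a(x,y) = ε has a unique solution y = y_ε(x) with ε/Ā ≤ y_ε(x) ≤ ε/A, the function y_ε is C¹, and |y_ε'(x)| ≤ C₁·ε where C₁ = 2A₁/A². -/

import Mathlib

noncomputable def cartPt (x y : ℝ) : EuclideanSpace ℝ (Fin 2) :=
  (WithLp.equiv 2 (Fin 2 → ℝ)).symm ![x, y]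

noncomputable def Pmap : (ℝ × ℝ) →L[ℝ] EuclideanSpace ℝ (Fin 2) :=
  (PiLp.continuousLinearEquiv 2 ℝ (fun _ : Fin 2 => ℝ)).symm.toContinuousLinearMap.comp
    (ContinuousLinearMap.pi ![ContinuousLinearMap.fst ℝ ℝ ℝ, ContinuousLinearMap.snd ℝ ℝ ℝ])

lemma Pmap_eq (x y : ℝ) : Pmap (x, y) = cartPt x y := by
  ext i
  fin_cases i <;> rfl

lemma norm_Pmap_e1 : ‖Pmap (1, 0)‖ = 1 := by
  rw [Pmap_eq]
  simp [EuclideanSpace.norm_eq, cartPt, Fin.sum_univ_two]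

lemma norm_Pmap_e2 : ‖Pmap (0, 1)‖ = 1 := by
  rw [Pmap_eq]
  simp [EuclideanSpace.norm_eq, cartPt, Fin.sum_univ_two]

noncomputable def linF (c d : ℝ) : (ℝ × ℝ) →L[ℝ] ℝ :=
  c • ContinuousLinearMap.fst ℝ ℝ ℝ + d • ContinuousLinearMap.snd ℝ ℝ ℝ

lemma linF_apply (c d u v : ℝ) : linF c d (u, v) = c * u + d * v := rfl

noncomputable def shearE (c d : ℝ) (hd : d ≠ 0) : (ℝ × ℝ) ≃L[ℝ] (ℝ × ℝ) :=
  ContinuousLinearEquiv.equivOfInverse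
    ((ContinuousLinearMap.fst ℝ ℝ ℝ).prod (linF c d))
    ((ContinuousLinearMap.fst ℝ ℝ ℝ).prod (linF (-c/d) d⁻¹))
    (fun p => by
      simp only [ContinuousLinearMap.prod_apply, ContinuousLinearMap.coe_fst']
      rw [linF_apply]
      ext
      · rfl
      · show -c/d * p.1 + d⁻¹ * (c * p.1 + d * p.2) = p.2
        field_simp; ring)
    (fun p => by
      simp only [ContinuousLinearMap.prod_apply, ContinuousLinearMap.coe_fst']
      rw [linF_apply]
      ext
      · rfl
      · show c * p.1 + d * (-c/d * p.1 + d⁻¹ * p.2) = p.2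
        field_simp; ring)

lemma shearE_coe (c d : ℝ) (hd : d ≠ 0) :
    (shearE c d hd : (ℝ × ℝ) →L[ℝ] (ℝ × ℝ)) =
      (ContinuousLinearMap.fst ℝ ℝ ℝ).prod (linF c d) := rfl

open Filter Topology Set

theorem stmt_8 (a : EuclideanSpace ℝ (Fin 2) → ℝ) (A Abar A₁ : ℝ)
    (hA : 0 < A) (ha : ContDiff ℝ 1 a)
    (hb : ∀ p, A ≤ a p ∧ a p ≤ Abar)
    (hgr : ∀ p, ‖gradient a p‖ ≤ A₁)
    (ε : ℝ) (hε : 0 < ε) (hε' : ε < min (1/2) (A ^ 2 / (2 * A₁))) :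
    ∃ yε : ℝ → ℝ, ContDiff ℝ 1 yε ∧ ∀ x : ℝ,
      ε / Abar ≤ yε x ∧ yε x ≤ ε / A ∧
      yε x * a (cartPt x (yε x)) = ε ∧
      (∀ y : ℝ, 0 < y → y * a (cartPt x y) = ε → y = yε x) ∧
      |deriv yε x| ≤ (2 * A₁ / A ^ 2) * ε := by
  -- basic constants
  have hA₁ : 0 < A₁ := by
    by_contra hcon
    push_neg at hcon
    have h2 : A ^ 2 / (2 * A₁) ≤ 0 :=
      div_nonpos_iff.mpr (Or.inl ⟨sq_nonneg A, by linarith⟩)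
    have := lt_of_lt_of_le hε' (min_le_right _ _)
    linarith
  have hεlt : ε < A ^ 2 / (2 * A₁) := lt_of_lt_of_le hε' (min_le_right _ _)
  have hεA₁ : 2 * ε * A₁ < A ^ 2 := by
    have := (lt_div_iff₀ (by positivity : (0:ℝ) < 2 * A₁)).mp hεlt
    nlinarith
  have hkey : ε / A * A₁ ≤ A / 2 := by
    rw [div_mul_eq_mul_div, div_le_div_iff₀ hA (by norm_num : (0:ℝ) < 2)]
    nlinarith
  have hAbarA : A ≤ Abar := le_trans (hb (cartPt 0 0)).1 (hb (cartPt 0 0)).2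
  have hAbar : 0 < Abar := lt_of_lt_of_le hA hAbarA
  -- gradient bound transfer
  have hfdnorm : ∀ q, ‖fderiv ℝ a q‖ ≤ A₁ := by
    intro q
    have hg : gradient a q = (InnerProductSpace.toDual ℝ _).symm (fderiv ℝ a q) := rfl
    have := hgr q
    rwa [hg, LinearIsometryEquiv.norm_map] at this
  have hDx : ∀ q, |fderiv ℝ a q (Pmap (1, 0))| ≤ A₁ := by
    intro q
    have h1 := (fderiv ℝ a q).le_opNorm (Pmap (1, 0))
    rw [norm_Pmap_e1, mul_one, Real.norm_eq_abs] at h1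
    exact h1.trans (hfdnorm q)
  have hDy : ∀ q, |fderiv ℝ a q (Pmap (0, 1))| ≤ A₁ := by
    intro q
    have h1 := (fderiv ℝ a q).le_opNorm (Pmap (0, 1))
    rw [norm_Pmap_e2, mul_one, Real.norm_eq_abs] at h1
    exact h1.trans (hfdnorm q)
  -- the function F
  set F : ℝ × ℝ → ℝ := fun p => p.2 * a (Pmap p) with hFdef
  have hFc : ContDiff ℝ 1 F := contDiff_snd.mul (ha.comp Pmap.contDiff)
  -- derivative of F
  have hF' : ∀ p : ℝ × ℝ, HasFDerivAt F
      (linF (p.2 * fderiv ℝ a (Pmap p) (Pmap (1, 0)))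
            (a (Pmap p) + p.2 * fderiv ℝ a (Pmap p) (Pmap (0, 1)))) p := by
    intro p
    have haD : HasFDerivAt (fun q : ℝ × ℝ => a (Pmap q)) ((fderiv ℝ a (Pmap p)).comp Pmap) p :=
      ((ha.differentiable one_ne_zero (Pmap p)).hasFDerivAt).comp p Pmap.hasFDerivAt
    have hmul := (hasFDerivAt_snd (𝕜 := ℝ) (E := ℝ) (F := ℝ) (p := p)).mul haD
    refine hmul.congr_fderiv (Eq.symm ?_)
    refine ContinuousLinearMap.ext fun q => ?_
    have hq : Pmap q = q.1 • Pmap (1, 0) + q.2 • Pmap (0, 1) := by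
      rw [← map_smul, ← map_smul, ← map_add]
      congr 1
      ext <;> simp
    have : fderiv ℝ a (Pmap p) (Pmap q) =
        q.1 * fderiv ℝ a (Pmap p) (Pmap (1, 0)) + q.2 * fderiv ℝ a (Pmap p) (Pmap (0, 1)) := by
      rw [hq, map_add, map_smul, map_smul, smul_eq_mul, smul_eq_mul]
    simp only [ContinuousLinearMap.add_apply, ContinuousLinearMap.coe_smul',
      Pi.smul_apply, ContinuousLinearMap.coe_comp', Function.comp_apply,
      ContinuousLinearMap.coe_snd', smul_eq_mul]
    rw [show q = (q.1, q.2) from rfl, linF_apply, this]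
    ring
  -- lower bound on the y-partial derivative
  have hdcoef : ∀ x y : ℝ, 0 ≤ y → y ≤ ε / A →
      A / 2 ≤ a (Pmap (x, y)) + y * fderiv ℝ a (Pmap (x, y)) (Pmap (0, 1)) := by
    intro x y hy0 hy1
    have h1 : |y * fderiv ℝ a (Pmap (x, y)) (Pmap (0, 1))| ≤ A / 2 := by
      rw [abs_mul, abs_of_nonneg hy0]
      calc y * |fderiv ℝ a (Pmap (x, y)) (Pmap (0, 1))| ≤ (ε / A) * A₁ := by
            apply mul_le_mul hy1 (hDy _) (abs_nonneg _) (by positivity)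
        _ ≤ A / 2 := hkey
    have h2 := neg_abs_le (y * fderiv ℝ a (Pmap (x, y)) (Pmap (0, 1)))
    have h3 := (hb (Pmap (x, y))).1
    linarith
  -- strict monotonicity in y
  have hgderiv : ∀ x y : ℝ, HasDerivAt (fun t => F (x, t))
      (a (Pmap (x, y)) + y * fderiv ℝ a (Pmap (x, y)) (Pmap (0, 1))) y := by
    intro x y
    have hcurve : HasDerivAt (fun t : ℝ => ((x, t) : ℝ × ℝ)) (0, 1) y :=
      (hasDerivAt_const y x).prodMk (hasDerivAt_id y)
    have := (hF' (x, y)).comp_hasDerivAt y hcurve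
    simpa [linF_apply, Function.comp_def] using this
  have hmono : ∀ x : ℝ, StrictMonoOn (fun t => F (x, t)) (Icc 0 (ε / A)) := by
    intro x
    apply strictMonoOn_of_deriv_pos (convex_Icc _ _)
    · exact (hFc.continuous.comp (continuous_const.prodMk continuous_id)).continuousOn
    · intro y hy
      rw [interior_Icc] at hy
      rw [(hgderiv x y).deriv]
      have := hdcoef x y hy.1.le hy.2.le
      linarith
  -- existence via IVT
  have hle : ε / Abar ≤ ε / A := div_le_div_of_nonneg_left hε.le hA hAbarA
  have hex : ∀ x : ℝ, ∃ y, y ∈ Icc (ε / Abar) (ε / A) ∧ F (x, y) = ε := by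
    intro x
    have hcont : ContinuousOn (fun t => F (x, t)) (Icc (ε / Abar) (ε / A)) :=
      (hFc.continuous.comp (continuous_const.prodMk continuous_id)).continuousOn
    have h1 : F (x, ε / Abar) ≤ ε := by
      have : (ε / Abar) * a (Pmap (x, ε / Abar)) ≤ (ε / Abar) * Abar :=
        mul_le_mul_of_nonneg_left (hb _).2 (by positivity)
      rw [div_mul_cancel₀ ε hAbar.ne'] at this
      exact this
    have h2 : ε ≤ F (x, ε / A) := by
      have : (ε / A) * A ≤ (ε / A) * a (Pmap (x, ε / A)) :=
        mul_le_mul_of_nonneg_left (hb _).1 (by positivity)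
      rw [div_mul_cancel₀ ε hA.ne'] at this
      exact this
    obtain ⟨y, hy, hFy⟩ := intermediate_value_Icc hle hcont ⟨h1, h2⟩
    exact ⟨y, hy, hFy⟩
  choose yε hyI hyF using hex
  have hy0 : ∀ x, 0 < yε x := fun x => lt_of_lt_of_le (by positivity) (hyI x).1
  -- uniqueness
  have huniq : ∀ x y : ℝ, 0 < y → F (x, y) = ε → y = yε x := by
    intro x y hy hFy
    have hya : y * A ≤ ε := by
      rw [← hFy]
      exact mul_le_mul_of_nonneg_left (hb _).1 hy.le
    have hyle : y ≤ ε / A := (le_div_iff₀ hA).mpr hya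
    have hmem1 : y ∈ Icc (0:ℝ) (ε / A) := ⟨hy.le, hyle⟩
    have hmem2 : yε x ∈ Icc (0:ℝ) (ε / A) := ⟨(hy0 x).le, (hyI x).2⟩
    exact (hmono x).injOn hmem1 hmem2 (by rw [hFy, hyF x])
  -- local smoothness via the inverse function theorem
  set G : ℝ × ℝ → ℝ × ℝ := fun p => (p.1, F p) with hGdef
  have hGc : ContDiff ℝ 1 G := contDiff_fst.prodMk hFc
  have hsmooth : ∀ x₀ : ℝ, ContDiffAt ℝ 1 yε x₀ := by
    intro x₀
    set p₀ : ℝ × ℝ := (x₀, yε x₀) with hp₀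
    set c₀ : ℝ := (yε x₀) * fderiv ℝ a (Pmap p₀) (Pmap (1, 0)) with hc₀
    set d₀ : ℝ := a (Pmap p₀) + (yε x₀) * fderiv ℝ a (Pmap p₀) (Pmap (0, 1)) with hd₀
    have hd₀pos : A / 2 ≤ d₀ := hdcoef x₀ (yε x₀) (hy0 x₀).le (hyI x₀).2
    have hd₀ne : d₀ ≠ 0 := (lt_of_lt_of_le (by positivity) hd₀pos).ne'
    have hG' : HasFDerivAt G ((shearE c₀ d₀ hd₀ne : (ℝ × ℝ) ≃L[ℝ] (ℝ × ℝ)) :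
        (ℝ × ℝ) →L[ℝ] (ℝ × ℝ)) p₀ := by
      rw [shearE_coe]
      exact (hasFDerivAt_fst).prodMk (hF' p₀)
    have hGat : ContDiffAt ℝ 1 G p₀ := hGc.contDiffAt
    have hstrict : HasStrictFDerivAt G ((shearE c₀ d₀ hd₀ne : (ℝ × ℝ) ≃L[ℝ] (ℝ × ℝ)) :
        (ℝ × ℝ) →L[ℝ] (ℝ × ℝ)) p₀ := hGat.hasStrictFDerivAt' hG' one_ne_zero
    set h : ℝ × ℝ → ℝ × ℝ := hstrict.localInverse G _ p₀ with hhdef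
    have hGp₀ : G p₀ = (x₀, ε) := by
      simp only [hGdef, hp₀]
      exact Prod.ext rfl (hyF x₀)
    have hhc : ContDiffAt ℝ 1 h (x₀, ε) := by
      rw [← hGp₀]
      exact hGat.to_localInverse hG' one_ne_zero
    have hri : ∀ᶠ q in 𝓝 ((x₀ : ℝ), ε) , G (h q) = q := by
      rw [← hGp₀]
      exact hstrict.eventually_right_inverse
    have hhp₀ : h (x₀, ε) = p₀ := by
      rw [← hGp₀]
      exact hstrict.localInverse_apply_image
    have htend : Tendsto (fun x : ℝ => ((x, ε) : ℝ × ℝ)) (𝓝 x₀) (𝓝 (x₀, ε)) :=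
      (continuous_id.prodMk continuous_const).tendsto x₀
    have ev1 : ∀ᶠ x in 𝓝 x₀, G (h (x, ε)) = (x, ε) := htend.eventually hri
    have htend2 : Tendsto (fun x : ℝ => (h (x, ε)).2) (𝓝 x₀) (𝓝 (yε x₀)) := by
      have h1 : Tendsto h (𝓝 (x₀, ε)) (𝓝 p₀) := by
        rw [← hhp₀]
        exact hhc.continuousAt
      have h2 := (continuous_snd.tendsto p₀).comp (h1.comp htend)
      exact h2
    have ev2 : ∀ᶠ x in 𝓝 x₀, 0 < (h (x, ε)).2 :=
      htend2.eventually (eventually_gt_nhds (hy0 x₀))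
    have evEq : yε =ᶠ[𝓝 x₀] fun x => (h (x, ε)).2 := by
      filter_upwards [ev1, ev2] with x h1 h2
      have hfst : (h (x, ε)).1 = x := congrArg Prod.fst h1
      have hsnd : F (h (x, ε)) = ε := congrArg Prod.snd h1
      have hp : h (x, ε) = (x, (h (x, ε)).2) := Prod.ext hfst rfl
      rw [hp] at hsnd
      exact (huniq x _ h2 hsnd).symm
    have hfc : ContDiffAt ℝ 1 (fun x : ℝ => (h (x, ε)).2) x₀ := by
      have hc1 : ContDiffAt ℝ 1 (fun x : ℝ => h (x, ε)) x₀ :=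
        hhc.comp x₀ ((contDiff_id.prodMk contDiff_const).contDiffAt)
      exact contDiffAt_snd.comp x₀ hc1
    exact hfc.congr_of_eventuallyEq evEq
  have hyC : ContDiff ℝ 1 yε := contDiff_iff_contDiffAt.mpr hsmooth
  -- derivative bound
  refine ⟨yε, hyC, fun x => ?_⟩
  have hFx : yε x * a (cartPt x (yε x)) = ε := by
    have h : yε x * a (Pmap (x, yε x)) = ε := hyF x
    rwa [Pmap_eq] at h
  refine ⟨(hyI x).1, (hyI x).2, hFx, ?_, ?_⟩
  · intro y hy hFy
    refine huniq x y hy ?_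
    show y * a (Pmap (x, y)) = ε
    rwa [Pmap_eq]
  · -- derivative bound
    set m : ℝ := deriv yε x with hm
    have hdm : HasDerivAt yε m x := ((hyC.differentiable one_ne_zero) x).hasDerivAt
    set p₀ : ℝ × ℝ := (x, yε x) with hp₀
    set c₀ : ℝ := (yε x) * fderiv ℝ a (Pmap p₀) (Pmap (1, 0)) with hc₀
    set d₀ : ℝ := a (Pmap p₀) + (yε x) * fderiv ℝ a (Pmap p₀) (Pmap (0, 1)) with hd₀
    have hd₀pos : A / 2 ≤ d₀ := hdcoef x (yε x) (hy0 x).le (hyI x).2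
    have hcurve : HasDerivAt (fun t : ℝ => ((t, yε t) : ℝ × ℝ)) (1, m) x :=
      (hasDerivAt_id x).prodMk hdm
    have hcomp : HasDerivAt (fun t : ℝ => F (t, yε t)) (linF c₀ d₀ (1, m)) x :=
      by have := (hF' p₀).comp_hasDerivAt x hcurve; exact this
    have hconst : (fun t : ℝ => F (t, yε t)) = fun _ => ε := funext fun t => hyF t
    have hzero : HasDerivAt (fun t : ℝ => F (t, yε t)) 0 x := by
      rw [hconst]; exact hasDerivAt_const x ε
    have heq : c₀ * 1 + d₀ * m = 0 := by
      have := hcomp.unique hzero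
      rwa [linF_apply] at this
    have hdm' : d₀ * m = -c₀ := by linarith
    have hc₀bd : |c₀| ≤ ε / A * A₁ := by
      rw [hc₀, abs_mul, abs_of_nonneg (hy0 x).le]
      exact mul_le_mul (hyI x).2 (hDx _) (abs_nonneg _) (by positivity)
    have habs : |d₀| * |m| = |c₀| := by
      rw [← abs_mul, hdm', abs_neg]
    have hd₀abs : A / 2 ≤ |d₀| := le_trans hd₀pos (le_abs_self d₀)
    have h1 : A / 2 * |m| ≤ |c₀| :=
      le_trans (mul_le_mul_of_nonneg_right hd₀abs (abs_nonneg m)) habs.le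
    have h2 : |m| ≤ (ε / A * A₁) / (A / 2) := by
      rw [le_div_iff₀ (by positivity : (0:ℝ) < A / 2)]
      nlinarith [hc₀bd]
    calc |m| ≤ (ε / A * A₁) / (A / 2) := h2
      _ = (2 * A₁ / A ^ 2) * ε := by field_simp
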